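/- The inverse Mills ratio 𝒜 is differentiable on ℝ with 𝒜′(x) = 𝒜(x)² − x·𝒜(x), and 0 ≤ 𝒜′(x) ≤ 1 for all x ∈ ℝ. (Lemma 4.4, items (iii) and (iv); the upper bound 𝒜′ ≤ 1 is equivalent to the nonnegativity of the conditional variance Var(Z | Z ≥ x).) -/

import Mathlib

open MeasureTheory ProbabilityTheory Filter Set

/-- The standard Gaussian measure on `ℝ`. -/
noncomputable def stdGauss : Measure ℝ := gaussianReal 0 1

/-- The Gaussian tail function `𝒩(x) = P(Z ≥ x)`. -/
noncomputable def gaussTail (x : ℝ) : ℝ := (stdGauss (Set.Ici x)).toReal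

/-- The inverse Mills ratio `𝒜(x) = e^{-x²/2} / (√(2π)·𝒩(x))`. -/
noncomputable def invMills (x : ℝ) : ℝ :=
  Real.exp (-x ^ 2 / 2) / (Real.sqrt (2 * Real.pi) * gaussTail x)

noncomputable def phi (t : ℝ) : ℝ := Real.exp (-t ^ 2 / 2) / Real.sqrt (2 * Real.pi)

lemma sqrt2pi_pos : 0 < Real.sqrt (2 * Real.pi) :=
  Real.sqrt_pos.mpr (by positivity)

lemma phi_pos (t : ℝ) : 0 < phi t := div_pos (Real.exp_pos _) sqrt2pi_pos

lemma continuous_phi : Continuous phi := by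
  unfold phi; fun_prop

lemma hasDerivAt_phi (t : ℝ) : HasDerivAt phi (-t * phi t) t := by
  have h1 : HasDerivAt (fun u : ℝ => -u ^ 2 / 2) (-t) t := by
    have := ((hasDerivAt_pow 2 t).neg).div_const 2
    simpa using this.congr_deriv (by ring)
  have h2 := (h1.exp).div_const (Real.sqrt (2 * Real.pi))
  exact h2.congr_deriv (by unfold phi; ring)

lemma integrable_phi : Integrable phi := by
  have h := (integrable_exp_neg_mul_sq (by norm_num : (0:ℝ) < 1/2)).div_const
    (Real.sqrt (2 * Real.pi))
  refine h.congr (ae_of_all _ fun t => ?_)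
  unfold phi; ring_nf

lemma integrable_mul_phi : Integrable (fun t : ℝ => t * phi t) := by
  have h := (integrable_mul_exp_neg_mul_sq (by norm_num : (0:ℝ) < 1/2)).div_const
    (Real.sqrt (2 * Real.pi))
  refine h.congr (ae_of_all _ fun t => ?_)
  unfold phi; ring_nf

lemma integrable_sq_mul_phi : Integrable (fun t : ℝ => t ^ 2 * phi t) := by
  have h := (integrable_rpow_mul_exp_neg_mul_sq (by norm_num : (0:ℝ) < 1/2)
    (by norm_num : (-1:ℝ) < 2)).div_const (Real.sqrt (2 * Real.pi))
  refine h.congr (ae_of_all _ fun t => ?_)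
  have h2 : t ^ (2:ℝ) = t ^ (2:ℕ) := by
    rw [← Real.rpow_natCast t 2]; norm_num
  simp only [h2]
  unfold phi; ring

lemma tendsto_phi : Tendsto phi atTop (nhds 0) := by
  have h1 : Tendsto (fun t : ℝ => -t ^ 2 / 2) atTop atBot := by
    apply Filter.Tendsto.atBot_div_const (by norm_num)
    exact tendsto_neg_atTop_atBot.comp (tendsto_pow_atTop two_ne_zero)
  have := (Real.tendsto_exp_atBot.comp h1).div_const (Real.sqrt (2 * Real.pi))
  simp only [zero_div] at this
  exact this.congr fun t => rfl

lemma tendsto_mul_phi : Tendsto (fun t : ℝ => t * phi t) atTop (nhds 0) := by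
  have h := rpow_mul_exp_neg_mul_sq_isLittleO_exp_neg (by norm_num : (0:ℝ) < 1/2) 1
  have h2 : Tendsto (fun t : ℝ => t * Real.exp (-(1/2) * t ^ 2)) atTop (nhds 0) := by
    have hg : Tendsto (fun x : ℝ => Real.exp (-(1/2) * x)) atTop (nhds 0) := by
      have h2 : Tendsto (fun x : ℝ => x / 2) atTop atTop :=
        tendsto_id.atTop_div_const (by norm_num)
      have h1 := tendsto_neg_atTop_atBot.comp h2
      exact Real.tendsto_exp_atBot.comp (h1.congr fun x => by simp [Function.comp]; ring)
    have := h.trans_tendsto hg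
    refine this.congr' ?_
    filter_upwards [eventually_ge_atTop (0:ℝ)] with t ht
    rw [Real.rpow_one]
  have := h2.div_const (Real.sqrt (2 * Real.pi))
  simp only [zero_div] at this
  refine this.congr fun t => ?_
  unfold phi; ring_nf

lemma gaussTail_eq (x : ℝ) : gaussTail x = ∫ t in Set.Ioi x, phi t := by
  have hpdf : ∀ t : ℝ, gaussianPDFReal 0 1 t = phi t := by
    intro t
    simp only [gaussianPDFReal, phi, NNReal.coe_one, mul_one, sub_zero]
    rw [div_eq_inv_mul]
    norm_num
    have h2 : Real.sqrt 2 ≠ 0 := by positivity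
    have hp : Real.sqrt Real.pi ≠ 0 := by
      refine (Real.sqrt_pos.mpr Real.pi_pos).ne'
    field_simp
  rw [gaussTail, stdGauss, gaussianReal_apply_eq_integral 0 one_ne_zero,
    ENNReal.toReal_ofReal (setIntegral_nonneg measurableSet_Ici
      (fun t _ => gaussianPDFReal_nonneg 0 1 t))]
  rw [integral_Ici_eq_integral_Ioi]
  exact setIntegral_congr_fun measurableSet_Ioi fun t _ => hpdf t

lemma gaussTail_pos (x : ℝ) : 0 < gaussTail x := by
  rw [gaussTail_eq]
  apply setIntegral_pos_iff_support_of_nonneg_ae (ae_of_all _ fun t => (phi_pos t).le)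
    (integrable_phi.integrableOn) |>.mpr
  have : (Function.support phi ∩ Set.Ioi x) = Set.Ioi x := by
    rw [Set.inter_eq_right]
    intro t _
    exact (phi_pos t).ne'
  rw [this]
  simp [Real.volume_Ioi]

lemma gaussTail_eq_sub (u : ℝ) : gaussTail u = gaussTail 0 - ∫ t in (0:ℝ)..u, phi t := by
  rw [← intervalIntegral.integral_Iic_sub_Iic integrable_phi.integrableOn
    integrable_phi.integrableOn, gaussTail_eq, gaussTail_eq]
  have h : ∀ a : ℝ, (∫ t in Set.Iic a, phi t) + ∫ t in Set.Ioi a, phi t = ∫ t, phi t := by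
    intro a
    rw [← integral_add_compl measurableSet_Iic integrable_phi, Set.compl_Iic]
  have h0 := h 0
  have hu := h u
  linarith

lemma hasDerivAt_gaussTail (x : ℝ) : HasDerivAt gaussTail (-phi x) x := by
  have h1 : HasDerivAt (fun u => ∫ t in (0:ℝ)..u, phi t) (phi x) x :=
    intervalIntegral.integral_hasDerivAt_right
      (integrable_phi.intervalIntegrable)
      (continuous_phi.stronglyMeasurableAtFilter _ _)
      continuous_phi.continuousAt
  have h2 := (hasDerivAt_const x (gaussTail 0)).sub h1
  simp only [zero_sub] at h2
  exact h2.congr_of_eventuallyEq (Eventually.of_forall fun u => gaussTail_eq_sub u)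

lemma invMills_eq (x : ℝ) : invMills x = phi x / gaussTail x := by
  rw [invMills, phi, div_div]

lemma hasDerivAt_invMills (x : ℝ) :
    HasDerivAt invMills (invMills x ^ 2 - x * invMills x) x := by
  have h := (hasDerivAt_phi x).div (hasDerivAt_gaussTail x) (gaussTail_pos x).ne'
  have heq : invMills = fun u => phi u / gaussTail u := funext invMills_eq
  rw [heq]
  refine h.congr_deriv ?_
  beta_reduce
  have hN := (gaussTail_pos x).ne'
  field_simp
  ring

lemma integral_id_mul_phi (x : ℝ) : ∫ t in Set.Ioi x, t * phi t = phi x := by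
  have hderiv : ∀ t ∈ Set.Ici x, HasDerivAt (fun u => -phi u) (t * phi t) t := by
    intro t _
    have := (hasDerivAt_phi t).neg
    exact this.congr_deriv (by ring)
  have := integral_Ioi_of_hasDerivAt_of_tendsto' hderiv
    integrable_mul_phi.integrableOn (tendsto_phi.neg)
  simpa using this

lemma integral_sq_mul_phi (x : ℝ) :
    ∫ t in Set.Ioi x, t ^ 2 * phi t = x * phi x + gaussTail x := by
  have hderiv : ∀ t ∈ Set.Ici x,
      HasDerivAt (fun u => -(u * phi u)) (t ^ 2 * phi t - phi t) t := by
    intro t _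
    have h1 : HasDerivAt (fun u : ℝ => u * phi u) (1 * phi t + t * (-t * phi t)) t :=
      (hasDerivAt_id t).mul (hasDerivAt_phi t)
    have := h1.neg
    exact this.congr_deriv (by ring)
  have hint : IntegrableOn (fun t => t ^ 2 * phi t - phi t) (Set.Ioi x) :=
    (integrable_sq_mul_phi.sub integrable_phi).integrableOn
  have htend : Tendsto (fun u => -(u * phi u)) atTop (nhds 0) := by
    simpa using tendsto_mul_phi.neg
  have h := integral_Ioi_of_hasDerivAt_of_tendsto' hderiv hint htend
  have hsub : ∫ t in Set.Ioi x, (t ^ 2 * phi t - phi t)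
      = (∫ t in Set.Ioi x, t ^ 2 * phi t) - ∫ t in Set.Ioi x, phi t :=
    integral_sub integrable_sq_mul_phi.integrableOn integrable_phi.integrableOn
  rw [hsub] at h
  rw [← gaussTail_eq] at *
  simp only [zero_sub, neg_neg] at h
  linarith

lemma mills_lower (x : ℝ) : x * gaussTail x ≤ phi x := by
  rw [← integral_id_mul_phi x, gaussTail_eq]
  rw [← integral_const_mul]
  apply setIntegral_mono_on (integrable_phi.integrableOn.const_mul x)
    integrable_mul_phi.integrableOn measurableSet_Ioi
  intro t ht
  exact mul_le_mul_of_nonneg_right (le_of_lt ht) (phi_pos t).le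

lemma cauchy_schwarz (x : ℝ) : phi x ^ 2 ≤ (x * phi x + gaussTail x) * gaussTail x := by
  have hNpos := gaussTail_pos x
  set N := gaussTail x with hN
  set l := phi x / N with hl
  have key : 0 ≤ ∫ t in Set.Ioi x, (t - l) ^ 2 * phi t :=
    setIntegral_nonneg measurableSet_Ioi fun t _ => mul_nonneg (sq_nonneg _) (phi_pos t).le
  have expand : ∫ t in Set.Ioi x, (t - l) ^ 2 * phi t
      = (∫ t in Set.Ioi x, t ^ 2 * phi t) - (2 * l) * (∫ t in Set.Ioi x, t * phi t)
        + l ^ 2 * ∫ t in Set.Ioi x, phi t := by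
    have e1 : ∫ t in Set.Ioi x, (t - l) ^ 2 * phi t
        = ∫ t in Set.Ioi x, ((t ^ 2 * phi t - (2 * l) * (t * phi t)) + l ^ 2 * phi t) := by
      apply setIntegral_congr_fun measurableSet_Ioi
      intro t _
      ring
    have hf : IntegrableOn (fun t : ℝ => t ^ 2 * phi t - 2 * l * (t * phi t)) (Set.Ioi x) :=
      (integrable_sq_mul_phi.sub (integrable_mul_phi.const_mul (2 * l))).integrableOn
    have hg : IntegrableOn (fun t : ℝ => l ^ 2 * phi t) (Set.Ioi x) :=
      integrable_phi.integrableOn.const_mul _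
    have hf1 : IntegrableOn (fun t : ℝ => t ^ 2 * phi t) (Set.Ioi x) :=
      integrable_sq_mul_phi.integrableOn
    have hf2 : IntegrableOn (fun t : ℝ => 2 * l * (t * phi t)) (Set.Ioi x) :=
      integrable_mul_phi.integrableOn.const_mul _
    rw [e1, integral_add hf hg, integral_sub hf1 hf2, integral_const_mul, integral_const_mul]
  rw [expand, integral_sq_mul_phi, integral_id_mul_phi, ← gaussTail_eq, ← hN, hl] at key
  have h2 : N ≠ 0 := hNpos.ne'
  have hid : ((x * phi x + N) - 2 * (phi x / N) * phi x + (phi x / N) ^ 2 * N)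
      = ((x * phi x + N) * N - phi x ^ 2) / N := by
    field_simp
    ring
  rw [show x * phi x + N - 2 * (phi x / N) * phi x + (phi x / N) ^ 2 * N
      = x * phi x + N - 2 * (phi x / N) * phi x + (phi x / N) ^ 2 * N from rfl] at key
  have key2 : 0 ≤ ((x * phi x + N) * N - phi x ^ 2) / N := by
    rw [← hid]; linarith
  have key3 : 0 ≤ (x * phi x + N) * N - phi x ^ 2 := by
    have := mul_nonneg key2 hNpos.le
    rwa [div_mul_cancel₀ _ h2] at this
  linarith

/-- Lemma 4.4, items (iii) and (iv): the inverse Mills ratio is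
differentiable with `𝒜′(x) = 𝒜(x)² − x·𝒜(x)`, and `0 ≤ 𝒜′(x) ≤ 1` for all `x`. -/
theorem statement_13 :
    ∀ x : ℝ, HasDerivAt invMills (invMills x ^ 2 - x * invMills x) x ∧
      0 ≤ deriv invMills x ∧ deriv invMills x ≤ 1 := by
  intro x
  have hd := hasDerivAt_invMills x
  have hN := gaussTail_pos x
  have hφ := phi_pos x
  have hml := mills_lower x
  have hcs := cauchy_schwarz x
  refine ⟨hd, ?_, ?_⟩ <;> rw [hd.deriv, invMills_eq]
  · have hA : 0 ≤ phi x / gaussTail x := div_nonneg hφ.le hN.le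
    have hAx : x ≤ phi x / gaussTail x := (le_div_iff₀ hN).mpr (by linarith)
    nlinarith [mul_nonneg hA (sub_nonneg.mpr hAx)]
  · have h : (phi x / gaussTail x) ^ 2 - x * (phi x / gaussTail x)
        = (phi x ^ 2 - x * phi x * gaussTail x) / gaussTail x ^ 2 := by
      field_simp
    rw [h, div_le_one (by positivity)]
    nlinarith
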